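/- The modified Borda count never exhibits a majority loser failure: in any election with possibly partial ballots on n candidates, if candidate A is ranked last (i.e., ranked n-th on a complete ballot) on strictly more than half of all ballots, then A does not have the strictly largest MBC score. -/

import Mathlib

/- A (possibly partial) ballot on `n` candidates is a duplicate-free nonempty list of
the ranked candidates in order of preference (head = first choice).  The modified
Borda count (MBC) awards points (k, k-1, ..., 1) to the k ranked candidates and 0 to
unranked candidates: the candidate at 0-indexed position i of a ballot of length k
receives k - i points. -/

/-- MBC score of candidate `c`. -/
def mbcScore (n : ℕ) (ballots : Multiset (List (Fin n))) (c : Fin n) : ℕ :=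
  (ballots.map (fun l => if c ∈ l then l.length - l.idxOf c else 0)).sum

namespace MBCAux

/-- points of candidate `c` on ballot `l`. -/
def pts (n : ℕ) (l : List (Fin n)) (c : Fin n) : ℕ :=
  if c ∈ l then l.length - l.idxOf c else 0

theorem two_mul_total (n : ℕ) (l : List (Fin n)) (hnd : l.Nodup) :
    2 * ∑ c : Fin n, pts n l c = l.length * (l.length + 1) := by
  have h1 : (∑ c : Fin n, pts n l c)
      = ∑ c ∈ l.toFinset, (l.length - l.idxOf c) := by
    unfold pts
    rw [← Finset.sum_filter]
    congr 1
    ext c; simp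
  have h2 : l.map (fun c => l.idxOf c) = List.range l.length := by
    apply List.ext_getElem
    · simp
    · intro i h1 h2
      simp only [List.getElem_map, List.getElem_range]
      exact List.Nodup.idxOf_getElem hnd i (by simpa using h1)
  have h6 : (List.range l.length).toFinset = Finset.range l.length := by
    ext c; simp
  have h3 : l.map (fun c => l.length - l.idxOf c)
      = (l.map (fun c => l.idxOf c)).map (fun i => l.length - i) := by
    rw [List.map_map]; rfl
  rw [h1, List.sum_toFinset _ hnd, h3, h2,
    ← List.sum_toFinset (fun i => l.length - i) (List.nodup_range (n := l.length)), h6]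
  have h5 : ∀ j ∈ Finset.range l.length, l.length - j = (l.length - 1 - j) + 1 := by
    intro j hj; rw [Finset.mem_range] at hj; omega
  rw [Finset.sum_congr rfl h5, Finset.sum_range_reflect (fun j => j + 1) l.length,
    Finset.sum_add_distrib, Finset.sum_const, Finset.card_range, smul_eq_mul, mul_one]
  have hg := Finset.sum_range_id_mul_two l.length
  have h7 : l.length * (l.length + 1) = l.length * (l.length - 1) + 2 * l.length := by
    cases l.length with
    | zero => simp
    | succ m => simp only [Nat.succ_sub_one]; ring
  omega

/-- On a "majority-loser" ballot (complete, with `A` last), `A` gets exactly 1 point. -/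
theorem pts_last (n : ℕ) (l : List (Fin n)) (A : Fin n) (hnd : l.Nodup) (hne : l ≠ [])
    (hlen : l.length = n) (hlast : l.getLast? = some A) : pts n l A = 1 := by
  have hA : A = l.getLast hne := by
    rw [List.getLast?_eq_getLast_of_ne_nil hne] at hlast
    exact (Option.some_injective _ hlast).symm
  have hlg : l.getLast hne = l[l.length - 1] := List.getLast_eq_getElem hne
  have hmem : A ∈ l := hA ▸ List.getLast_mem hne
  have hlpos : 0 < l.length := List.length_pos_iff.mpr hne
  have hidx : l.idxOf A = l.length - 1 := by
    rw [hA, hlg]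
    exact List.Nodup.idxOf_getElem hnd _ (by omega)
  unfold pts
  rw [if_pos hmem, hidx]
  omega

theorem pts_le (n : ℕ) (l : List (Fin n)) (c : Fin n) : pts n l c ≤ l.length := by
  unfold pts
  split <;> omega

theorem key_arith (s k n : ℕ) (h1 : s ≤ k) (h2 : k ≤ n) :
    2 * n * s ≤ k * (k + 1) + n * (n - 1) := by
  have h3 : 2 * n * s ≤ 2 * n * k := Nat.mul_le_mul_left _ h1
  obtain ⟨d, rfl⟩ := Nat.le.dest h2
  cases d with
  | zero =>
    simp only [Nat.add_zero] at *
    cases k with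
    | zero => simpa using h3
    | succ m =>
      have h4 : (m+1)*(m+1+1) + (m+1)*((m+1)-1) = 2*(m+1)*(m+1) := by
        simp only [Nat.succ_sub_one]; ring
      omega
  | succ e =>
    have h5 : (k + (e + 1)) - 1 = k + e := by omega
    rw [h5]
    have h6 : k * (k+1) + (k + (e+1)) * (k + e) = 2 * (k + (e+1)) * k + e * e + e := by
      ring
    omega

/-- The per-ballot key inequality. -/
theorem key (n : ℕ) (hn : 2 ≤ n) (l : List (Fin n)) (hne : l ≠ []) (hnd : l.Nodup)
    (A : Fin n) :
    2 * n * pts n l A + (if l.length = n ∧ l.getLast? = some A then n * (n - 1) else 0)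
      ≤ 2 * ∑ c : Fin n, pts n l c
        + (if l.length = n ∧ l.getLast? = some A then 0 else n * (n - 1)) := by
  rw [two_mul_total n l hnd]
  have hkn : l.length ≤ n := hnd.length_le_card.trans (by simp)
  split
  · next h =>
    rw [pts_last n l A hnd hne h.1 h.2, h.1]
    have : 2 * n * 1 + n * (n - 1) = n * (n + 1) := by
      cases n with
      | zero => simp
      | succ m => simp only [Nat.succ_sub_one]; ring
    omega
  · next h =>
    have hp := pts_le n l A
    have := key_arith (pts n l A) l.length n hp hkn
    omega

theorem sum_map_ite_eq (p : α → Prop) [DecidablePred p] (s : Multiset α) (x : ℕ) :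
    (s.map (fun l => if p l then x else 0)).sum = (s.filter p).card * x := by
  induction s using Multiset.induction with
  | empty => simp
  | cons a s ih =>
    rw [Multiset.map_cons, Multiset.sum_cons, ih, Multiset.filter_cons]
    split
    · rw [Multiset.card_add, Multiset.card_singleton, add_mul, one_mul]
    · simpa using ih

theorem sum_map_ite_eq' (p : α → Prop) [DecidablePred p] (s : Multiset α) (x : ℕ) :
    (s.map (fun l => if p l then 0 else x)).sum
      = (s.filter (fun l => ¬ p l)).card * x := by
  rw [← sum_map_ite_eq (fun l => ¬ p l) s x]
  congr 1
  apply Multiset.map_congr rfl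
  intro l _
  by_cases h : p l <;> simp [h]

theorem swap_sum (n : ℕ) (s : Multiset (List (Fin n))) :
    ∑ c : Fin n, (s.map (fun l => pts n l c)).sum
      = (s.map (fun l => ∑ c : Fin n, pts n l c)).sum := by
  induction s using Multiset.induction with
  | empty => simp
  | cons a s ih =>
    simp only [Multiset.map_cons, Multiset.sum_cons, ← ih, Finset.sum_add_distrib]

end MBCAux

/-- **MBC never exhibits a majority loser failure**: if `A` is ranked last (i.e. in
the final position of a complete ballot) on strictly more than half of all ballots,
then `A` does not have the strictly largest MBC score. -/
theorem mbc_no_majority_loser (n : ℕ) (hn : 2 ≤ n)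
    (ballots : Multiset (List (Fin n)))
    (hvalid : ∀ l ∈ ballots, l ≠ [] ∧ l.Nodup)
    (A : Fin n)
    (hML : 2 * (ballots.filter (fun l => l.length = n ∧ l.getLast? = some A)).card >
      ballots.card) :
    ¬ (∀ B : Fin n, B ≠ A → mbcScore n ballots B < mbcScore n ballots A) := by
  intro hcontra
  set p : List (Fin n) → Prop := fun l => l.length = n ∧ l.getLast? = some A with hp
  have hscore : ∀ c, mbcScore n ballots c = (ballots.map (fun l => MBCAux.pts n l c)).sum := by
    intro c; rfl
  -- sum the per-ballot inequality over all ballots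
  have hsum : (ballots.map (fun l => 2 * n * MBCAux.pts n l A
        + (if p l then n * (n - 1) else 0))).sum
      ≤ (ballots.map (fun l => 2 * ∑ c : Fin n, MBCAux.pts n l c
        + (if p l then 0 else n * (n - 1)))).sum := by
    apply Multiset.sum_map_le_sum_map
    intro l hl
    exact MBCAux.key n hn l (hvalid l hl).1 (hvalid l hl).2 A
  rw [Multiset.sum_map_add, Multiset.sum_map_add, MBCAux.sum_map_ite_eq,
    MBCAux.sum_map_ite_eq'] at hsum
  have hM : (ballots.filter p).card * (n * (n - 1))
      ≥ (ballots.filter (fun l => ¬ p l)).card * (n * (n - 1)) + n * (n - 1) := by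
    have hcard : (ballots.filter p).card + (ballots.filter (fun l => ¬ p l)).card
        = ballots.card := by
      rw [← Multiset.card_add, Multiset.filter_add_not]
    have hML' : 2 * (ballots.filter p).card > ballots.card := hML
    have : (ballots.filter (fun l => ¬ p l)).card + 1 ≤ (ballots.filter p).card := by omega
    calc (ballots.filter (fun l => ¬ p l)).card * (n * (n - 1)) + n * (n - 1)
        = ((ballots.filter (fun l => ¬ p l)).card + 1) * (n * (n - 1)) := by ring
      _ ≤ (ballots.filter p).card * (n * (n - 1)) := Nat.mul_le_mul_right _ this
  -- hence 2 n · score A ≤ 2 · total score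
  have hmul2 : ∀ (x : ℕ), (ballots.map (fun l => 2 * x * MBCAux.pts n l A)).sum
      = 2 * x * mbcScore n ballots A := by
    intro x
    rw [hscore, ← Multiset.sum_map_mul_left]
  have hmulsum : (ballots.map (fun l => 2 * ∑ c : Fin n, MBCAux.pts n l c)).sum
      = 2 * ∑ c : Fin n, mbcScore n ballots c := by
    rw [Multiset.sum_map_mul_left]
    congr 1
    simp only [hscore]
    rw [MBCAux.swap_sum]
  rw [hmul2, hmulsum] at hsum
  have hmain : 2 * n * mbcScore n ballots A ≤ 2 * ∑ c : Fin n, mbcScore n ballots c := by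
    omega
  -- split the total score
  have hsplit : ∑ c : Fin n, mbcScore n ballots c
      = mbcScore n ballots A + ∑ c ∈ Finset.univ.erase A, mbcScore n ballots c := by
    rw [← Finset.add_sum_erase _ _ (Finset.mem_univ A)]
  -- upper bound on the others' total from the contradiction hypothesis
  have hub : ∑ c ∈ Finset.univ.erase A, (mbcScore n ballots c + 1)
      ≤ ∑ c ∈ Finset.univ.erase A, mbcScore n ballots A := by
    apply Finset.sum_le_sum
    intro c hc
    exact hcontra c (Finset.ne_of_mem_erase hc)
  rw [Finset.sum_add_distrib, Finset.sum_const, Finset.sum_const, Finset.card_erase_of_mem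
    (Finset.mem_univ A), Finset.card_univ, Fintype.card_fin, smul_eq_mul, mul_one,
    smul_eq_mul] at hub
  -- lower bound on the others' total
  have hlb : (n - 1) * mbcScore n ballots A
      ≤ ∑ c ∈ Finset.univ.erase A, mbcScore n ballots c := by
    have h2 : 2 * n * mbcScore n ballots A
        = 2 * mbcScore n ballots A + 2 * ((n - 1) * mbcScore n ballots A) := by
      cases n with
      | zero => omega
      | succ m => simp only [Nat.succ_sub_one]; ring
    omega
  omega
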